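/- For α ∈ (0,1)∪(1,∞), joint distribution p_X p_{Y|X} on finite alphabets, and uniform distribution u_X on X, the Arimoto mutual information satisfies I_α^A(X;Y) = min over distributions q_Y of { D_α(p_X p_{Y|X} ‖ u_X q_Y) − D_α(p_X ‖ u_X) }. -/

import Mathlib

open BigOperators

/-- `p` is a probability distribution on the finite set `X`. -/
def IsDist {X : Type*} [Fintype X] (p : X → ℝ) : Prop :=
  (∀ x, 0 ≤ p x) ∧ ∑ x, p x = 1

/-- `W` is a channel from `X` to `Y`. -/
def IsChannel {X Y : Type*} [Fintype Y] (W : X → Y → ℝ) : Prop :=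
  ∀ x, (∀ y, 0 ≤ W x y) ∧ ∑ y, W x y = 1

/-- The Rényi entropy of order `a` of a distribution `p`. -/
noncomputable def renyi {X : Type*} [Fintype X] (p : X → ℝ) (a : ℝ) : ℝ :=
  (1 / (1 - a)) * Real.log (∑ x, p x ^ a)

theorem arimotoMI_eq_min_div_uniform {X Y : Type*} [Fintype X] [Fintype Y]
    [Nonempty X] [Nonempty Y]
    (α : ℝ) (hα0 : 0 < α) (hα1 : α ≠ 1)
    (p : X → ℝ) (W : X → Y → ℝ)
    (hp : IsDist p) (hps : ∀ x, 0 < p x) (hW : IsChannel W)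
    (hWc : ∀ y, ∃ x, 0 < W x y) :
    IsLeast {v : ℝ | ∃ q : Y → ℝ, IsDist q ∧ (∀ y, 0 < q y) ∧
        v = (1 / (α - 1)) * Real.log (∑ x, ∑ y,
              (p x * W x y) ^ α * (((Fintype.card X : ℝ))⁻¹ * q y) ^ (1 - α))
          - (1 / (α - 1)) * Real.log (∑ x, p x ^ α * ((Fintype.card X : ℝ)⁻¹) ^ (1 - α))}
      (renyi p α
        - (α / (1 - α)) * Real.log (∑ y, (∑ x, p x ^ α * W x y ^ α) ^ (1 / α))) := by
  have hα1' : α - 1 ≠ 0 := sub_ne_zero.mpr hα1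
  have h1α : (1 : ℝ) - α ≠ 0 := fun h => hα1 (by linarith)
  set c : ℝ := ((Fintype.card X : ℝ))⁻¹ with hc
  have hcpos : 0 < c := by
    rw [hc]; positivity
  set A : Y → ℝ := fun y => ∑ x, p x ^ α * W x y ^ α with hA
  have hApos : ∀ y, 0 < A y := by
    intro y
    obtain ⟨x0, hx0⟩ := hWc y
    refine Finset.sum_pos' (fun x _ =>
      mul_nonneg (Real.rpow_nonneg (hps x).le _) (Real.rpow_nonneg ((hW x).1 y) _))
      ⟨x0, Finset.mem_univ _,
        mul_pos (Real.rpow_pos_of_pos (hps x0) _) (Real.rpow_pos_of_pos hx0 _)⟩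
  set S : ℝ := ∑ y, A y ^ (1 / α) with hS
  have hSpos : 0 < S :=
    Finset.sum_pos (fun y _ => Real.rpow_pos_of_pos (hApos y) _) Finset.univ_nonempty
  set P : ℝ := ∑ x, p x ^ α with hP
  have hPpos : 0 < P :=
    Finset.sum_pos (fun x _ => Real.rpow_pos_of_pos (hps x) _) Finset.univ_nonempty
  -- rewrite the double sum
  have hsum : ∀ q : Y → ℝ, (∀ y, 0 ≤ q y) →
      (∑ x, ∑ y, (p x * W x y) ^ α * (c * q y) ^ (1 - α))
        = c ^ (1 - α) * ∑ y, A y * q y ^ (1 - α) := by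
    intro q hq
    rw [Finset.sum_comm, Finset.mul_sum]
    refine Finset.sum_congr rfl fun y _ => ?_
    rw [hA]
    rw [Finset.sum_mul, Finset.mul_sum]
    refine Finset.sum_congr rfl fun x _ => ?_
    rw [Real.mul_rpow (hps x).le ((hW x).1 y), Real.mul_rpow hcpos.le (hq y)]
    ring
  have hsecond : (∑ x, p x ^ α * c ^ (1 - α)) = c ^ (1 - α) * P := by
    rw [hP, Finset.mul_sum]; exact Finset.sum_congr rfl fun x _ => mul_comm _ _
  -- value of the objective at q
  have hval : ∀ q : Y → ℝ, (∀ y, 0 < q y) →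
      ((1 / (α - 1)) * Real.log (∑ x, ∑ y,
          (p x * W x y) ^ α * (c * q y) ^ (1 - α))
        - (1 / (α - 1)) * Real.log (∑ x, p x ^ α * c ^ (1 - α)))
      = (1 / (α - 1)) * (Real.log (∑ y, A y * q y ^ (1 - α)) - Real.log P) := by
    intro q hq
    have hT : 0 < ∑ y, A y * q y ^ (1 - α) :=
      Finset.sum_pos (fun y _ => mul_pos (hApos y) (Real.rpow_pos_of_pos (hq y) _))
        Finset.univ_nonempty
    have hcp : (0 : ℝ) < c ^ (1 - α) := Real.rpow_pos_of_pos hcpos _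
    rw [hsum q (fun y => (hq y).le), hsecond,
      Real.log_mul hcp.ne' hT.ne', Real.log_mul hcp.ne' hPpos.ne']
    ring
  -- target value
  have htarget : renyi p α - (α / (1 - α)) * Real.log S
      = (1 / (α - 1)) * (α * Real.log S - Real.log P) := by
    rw [renyi, ← hP]
    field_simp
    ring
  constructor
  · -- membership with the optimal q
    refine ⟨fun y => A y ^ (1 / α) / S,
      ⟨fun y => (div_pos (Real.rpow_pos_of_pos (hApos y) _) hSpos).le, ?_⟩,
      fun y => div_pos (Real.rpow_pos_of_pos (hApos y) _) hSpos, ?_⟩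
    · rw [← Finset.sum_div, ← hS, div_self hSpos.ne']
    · have hopt : (∑ y, A y * (A y ^ (1 / α) / S) ^ (1 - α)) = S ^ α := by
        have e0 : ∀ y, A y * (A y ^ (1 / α) / S) ^ (1 - α)
            = A y ^ (1 / α) / S ^ (1 - α) := by
          intro y
          rw [Real.div_rpow (Real.rpow_nonneg (hApos y).le _) hSpos.le,
            ← Real.rpow_mul (hApos y).le, mul_div_assoc']
          congr 1
          have e1 : A y * A y ^ (1 / α * (1 - α)) = A y ^ (1 + 1 / α * (1 - α)) := by
            rw [Real.rpow_add (hApos y), Real.rpow_one]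
          rw [e1]
          congr 1
          field_simp
          ring
        rw [Finset.sum_congr rfl fun y _ => e0 y, ← Finset.sum_div, ← hS, eq_comm,
          eq_div_iff (Real.rpow_pos_of_pos hSpos _).ne', ← Real.rpow_add hSpos,
          show α + (1 - α) = 1 by ring, Real.rpow_one]
      rw [hval (fun y => A y ^ (1 / α) / S)
          (fun y => div_pos (Real.rpow_pos_of_pos (hApos y) _) hSpos),
        hopt, Real.log_rpow hSpos, htarget]
  · -- lower bound
    rintro v ⟨q, ⟨hq0, hq1⟩, hqpos, rfl⟩
    rw [hval q hqpos, htarget]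
    have hT : 0 < ∑ y, A y * q y ^ (1 - α) :=
      Finset.sum_pos (fun y _ => mul_pos (hApos y) (Real.rpow_pos_of_pos (hqpos y) _))
        Finset.univ_nonempty
    set z : Y → ℝ := fun y => A y ^ (1 / α) / q y with hz
    have hznn : ∀ y, 0 ≤ z y := fun y =>
      (div_pos (Real.rpow_pos_of_pos (hApos y) _) (hqpos y)).le
    have hsumz : ∑ y, q y * z y = S := by
      rw [hS]
      refine Finset.sum_congr rfl fun y _ => ?_
      rw [hz, mul_div_assoc', mul_div_cancel_left₀ _ (hqpos y).ne']
    have hterm : ∀ y, q y * z y ^ α = A y * q y ^ (1 - α) := by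
      intro y
      have hqα : q y ^ α ≠ 0 := (Real.rpow_pos_of_pos (hqpos y) _).ne'
      rw [hz, Real.div_rpow (Real.rpow_nonneg (hApos y).le _) (hqpos y).le,
        ← Real.rpow_mul (hApos y).le, one_div_mul_cancel hα0.ne', Real.rpow_one,
        Real.rpow_sub (hqpos y), Real.rpow_one]
      field_simp
    rcases lt_or_gt_of_ne hα1 with h1 | h1
    · -- α < 1
      have hjen : (∑ y, A y * q y ^ (1 - α)) ≤ S ^ α := by
        have key := Real.arith_mean_le_rpow_mean Finset.univ q (fun y => z y ^ α)
          (fun y _ => (hqpos y).le) hq1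
          (fun y _ => Real.rpow_nonneg (hznn y) _)
          (p := 1 / α) (by rw [le_div_iff₀ hα0]; linarith)
        calc (∑ y, A y * q y ^ (1 - α)) = ∑ y, q y * z y ^ α :=
              (Finset.sum_congr rfl fun y _ => (hterm y).symm)
          _ ≤ (∑ y, q y * (z y ^ α) ^ (1 / α)) ^ (1 / (1 / α)) := key
          _ = S ^ α := by
              rw [one_div_one_div]
              congr 1
              rw [← hsumz]
              refine Finset.sum_congr rfl fun y _ => ?_
              rw [← Real.rpow_mul (hznn y), mul_one_div, div_self hα0.ne',
                Real.rpow_one]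
      have hlog : Real.log (∑ y, A y * q y ^ (1 - α)) ≤ α * Real.log S := by
        rw [← Real.log_rpow hSpos]
        exact Real.log_le_log hT hjen
      have hneg : (1 / (α - 1)) ≤ 0 := by
        apply div_nonpos_of_nonneg_of_nonpos <;> nlinarith
      have := mul_le_mul_of_nonpos_left (sub_le_sub_right hlog (Real.log P)) hneg
      linarith
    · -- α > 1
      have hjen : S ^ α ≤ ∑ y, A y * q y ^ (1 - α) := by
        have key := Real.rpow_arith_mean_le_arith_mean_rpow Finset.univ q z
          (fun y _ => (hqpos y).le) hq1
          (fun y _ => hznn y) (p := α) h1.le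
        rw [hsumz] at key
        calc S ^ α ≤ ∑ y, q y * z y ^ α := key
          _ = ∑ y, A y * q y ^ (1 - α) := Finset.sum_congr rfl fun y _ => hterm y
      have hlog : α * Real.log S ≤ Real.log (∑ y, A y * q y ^ (1 - α)) := by
        rw [← Real.log_rpow hSpos]
        exact Real.log_le_log (Real.rpow_pos_of_pos hSpos _) hjen
      have hpos : 0 ≤ (1 / (α - 1)) := le_of_lt (div_pos one_pos (by linarith))
      have := mul_le_mul_of_nonneg_left (sub_le_sub_right hlog (Real.log P)) hpos
      linarith
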